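/- Every nonempty word w over A has exactly one Nyldon factorization: there exists a unique sequence (n_1, n_2, …, n_k) of Nyldon words with n_1 ≤_lex n_2 ≤_lex ⋯ ≤_lex n_k and w = n_1 n_2 ⋯ n_k. -/

import Mathlib

/-!
Common definitions: words over a totally ordered alphabet, lexicographic order,
Nyldon and Lyndon words, Nyldon-like sets, right Hall sets, and (circular) codes.
-/

/-- Strict lexicographic order on words: `u <_lex v` iff `u` is a proper prefix of `v`,
or `u` and `v` first differ at a position where `u` has the smaller letter. -/
def LexLt {A : Type*} [LinearOrder A] (u v : List A) : Prop :=
  List.Lex (· < ·) u v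

/-- Nonstrict lexicographic order on words. -/
def LexLe {A : Type*} [LinearOrder A] (u v : List A) : Prop :=
  u = v ∨ LexLt u v

theorem length_le_length_flatten_of_ne_nil {A : Type*} {s : List (List A)}
    (h : ∀ g ∈ s, g ≠ []) : s.length ≤ s.flatten.length := by
  induction s with
  | nil => simp
  | cons a t ih =>
    simp only [List.flatten_cons, List.length_append, List.length_cons]
    have ha : 1 ≤ a.length := List.length_pos_iff.mpr (h a (by simp))
    have ht := ih (fun g hg => h g (List.mem_cons_of_mem _ hg))
    omega

theorem length_lt_length_flatten {A : Type*} {f : List A} {fs : List (List A)}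
    (h2 : 2 ≤ fs.length) (hne : ∀ g ∈ fs, g ≠ []) (hf : f ∈ fs) :
    f.length < fs.flatten.length := by
  obtain ⟨s, t, rfl⟩ := List.append_of_mem hf
  have hs : s.length ≤ s.flatten.length :=
    length_le_length_flatten_of_ne_nil (fun g hg => hne g (by simp [hg]))
  have ht : t.length ≤ t.flatten.length :=
    length_le_length_flatten_of_ne_nil (fun g hg => hne g (by simp [hg]))
  have hlen : 2 ≤ s.length + t.length + 1 := by
    simp only [List.length_append, List.length_cons] at h2
    omega
  have hj : (s ++ f :: t).flatten.length
      = s.flatten.length + f.length + t.flatten.length := by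
    simp [List.flatten_append]
    omega
  omega

/-- A nonempty word is Nyldon if it admits no factorization into at least two
lexicographically nondecreasing Nyldon words. (Single letters are Nyldon vacuously,
since they admit no factorization into at least two nonempty words at all.) -/
def IsNyldon {A : Type*} [LinearOrder A] (w : List A) : Prop :=
  w ≠ [] ∧ ∀ fs : List (List A), 2 ≤ fs.length → (∀ g ∈ fs, g ≠ []) →
    fs.flatten = w → (∀ f ∈ fs, IsNyldon f) → fs.Chain' LexLe → False
termination_by w.length
decreasing_by
  rename_i h2 hne hjoin hf
  subst hjoin
  exact length_lt_length_flatten h2 hne hf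

/-- A nonempty word is Lyndon if it admits no factorization into at least two
lexicographically nonincreasing Lyndon words. -/
def IsLyndon {A : Type*} [LinearOrder A] (w : List A) : Prop :=
  w ≠ [] ∧ ∀ fs : List (List A), 2 ≤ fs.length → (∀ g ∈ fs, g ≠ []) →
    fs.flatten = w → (∀ f ∈ fs, IsLyndon f) →
    fs.Chain' (fun u v => LexLe v u) → False
termination_by w.length
decreasing_by
  rename_i h2 hne hjoin hf
  subst hjoin
  exact length_lt_length_flatten h2 hne hf

/-- `fs` is a Nyldon factorization of `w`: a nondecreasing (under `≤_lex`) sequence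
of Nyldon words whose concatenation is `w`. -/
def IsNyldonFactorization {A : Type*} [LinearOrder A] (fs : List (List A)) (w : List A) :
    Prop :=
  (∀ f ∈ fs, IsNyldon f) ∧ fs.Chain' LexLe ∧ fs.flatten = w

/-- The `j`-th power `u^j` of a word `u`: the concatenation of `j` copies of `u`. -/
def wordPow {A : Type*} (u : List A) (j : ℕ) : List A :=
  (List.replicate j u).flatten

/-- A word is primitive if it is not a power `u^j` of a word `u` with `j ≥ 2`. -/
def Primitive {A : Type*} (w : List A) : Prop :=
  ∀ (u : List A) (j : ℕ), 2 ≤ j → w ≠ wordPow u j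

/-- A Nyldon-like set over the alphabet `A`: a set `Mem` of nonempty words together with a
strict total order `lt` on it, such that every single letter is in the set, a word of length
at least `2` is in the set iff it admits no factorization into at least two nondecreasing
words of the set, and `f ≺ fg` whenever `f`, `g`, `fg` are all in the set. -/
structure NyldonLike (A : Type*) where
  /-- membership in `G` -/
  Mem : List A → Prop
  /-- the strict total order `≺` on `G` -/
  lt : List A → List A → Prop
  mem_ne_nil : ∀ w, Mem w → w ≠ []
  lt_irrefl : ∀ u, Mem u → ¬ lt u u
  lt_trans : ∀ u v x, Mem u → Mem v → Mem x → lt u v → lt v x → lt u x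
  lt_total : ∀ u v, Mem u → Mem v → lt u v ∨ u = v ∨ lt v u
  singleton_mem : ∀ a : A, Mem [a]
  mem_iff : ∀ w : List A, 2 ≤ w.length →
    (Mem w ↔ ¬ ∃ fs : List (List A), 2 ≤ fs.length ∧ (∀ f ∈ fs, Mem f) ∧
      fs.Chain' (fun u v => u = v ∨ lt u v) ∧ fs.flatten = w)
  append_lt : ∀ f g, Mem f → Mem g → Mem (f ++ g) → lt f (f ++ g)

namespace NyldonLike

variable {A : Type*}

/-- The nonstrict order `⪯` associated to a Nyldon-like set. -/
def le (G : NyldonLike A) (u v : List A) : Prop :=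
  u = v ∨ G.lt u v

/-- `fs` is a `G`-factorization of `w`: a nondecreasing (under `⪯`) sequence of
`G`-words whose concatenation is `w`. -/
def IsFactorization (G : NyldonLike A) (fs : List (List A)) (w : List A) : Prop :=
  (∀ f ∈ fs, G.Mem f) ∧ fs.Chain' G.le ∧ fs.flatten = w

end NyldonLike

/-- A factorization `fs` of a word written as the concatenation of `blocks` preserves the
blocks if each factor is the concatenation of a (nonempty) consecutive run of whole blocks. -/
def PreservesBlocks {A : Type*} (blocks fs : List (List A)) : Prop :=
  ∃ P : List (List (List A)), (∀ p ∈ P, p ≠ []) ∧ P.flatten = blocks ∧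
    P.map List.flatten = fs

/-- A right Hall set over the alphabet `A`: a set `Mem` of nonempty words with a strict
total order `lt` such that every nonempty word has a unique nondecreasing factorization
into words of the set, and `fg ≻ g` whenever `f`, `g`, `fg` are all in the set. -/
structure RightHallSet (A : Type*) where
  /-- membership in `H` -/
  Mem : List A → Prop
  /-- the strict total order `≺` on `H` -/
  lt : List A → List A → Prop
  mem_ne_nil : ∀ w, Mem w → w ≠ []
  lt_irrefl : ∀ u, Mem u → ¬ lt u u
  lt_trans : ∀ u v x, Mem u → Mem v → Mem x → lt u v → lt v x → lt u x
  lt_total : ∀ u v, Mem u → Mem v → lt u v ∨ u = v ∨ lt v u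
  unique_factorization : ∀ w : List A, w ≠ [] →
    ∃! fs : List (List A), (∀ f ∈ fs, Mem f) ∧
      fs.Chain' (fun u v => u = v ∨ lt u v) ∧ fs.flatten = w
  append_gt : ∀ f g, Mem f → Mem g → Mem (f ++ g) → lt g (f ++ g)

/-- A set `F` of words is a code if any two sequences of words of `F` with equal
concatenations are equal. -/
def IsCode {A : Type*} (F : List A → Prop) : Prop :=
  ∀ l₁ l₂ : List (List A), (∀ f ∈ l₁, F f) → (∀ f ∈ l₂, F f) →
    l₁.flatten = l₂.flatten → l₁ = l₂

/-- `w ∈ F*`: `w` is a concatenation of (zero or more) words of `F`. -/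
def CodeStar {A : Type*} (F : List A → Prop) (w : List A) : Prop :=
  ∃ l : List (List A), (∀ f ∈ l, F f) ∧ l.flatten = w

/-- A set `F` of words is a circular code if it is a code and whenever
`uv ∈ F*` and `vu ∈ F*`, also `u ∈ F*` and `v ∈ F*`. -/
def IsCircularCode {A : Type*} (F : List A → Prop) : Prop :=
  IsCode F ∧ ∀ u v : List A, CodeStar F (u ++ v) → CodeStar F (v ++ u) → CodeStar F u ∧ CodeStar F v


/-! ### Auxiliary lemmas for Statement 2 -/

section Stmt2Aux

variable {A : Type*} [LinearOrder A]

theorem lexLt_trans' {u v x : List A} (h1 : LexLt u v) (h2 : LexLt v x) : LexLt u x := by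
  unfold LexLt at *; exact List.lex_trans lt_trans h1 h2

theorem lexLt_irrefl' (u : List A) : ¬ LexLt u u := by
  unfold LexLt; exact _root_.irrefl u

theorem lex_total' (u v : List A) : LexLt u v ∨ u = v ∨ LexLt v u := by
  unfold LexLt; exact trichotomous u v

theorem lexLt_of_not_lexLe {u v : List A} (h : ¬ LexLe u v) : LexLt v u := by
  rcases lex_total' u v with h1 | h1 | h1
  · exact absurd (Or.inr h1) h
  · exact absurd (Or.inl h1) h
  · exact h1

theorem lexLt_append' {u v : List A} (z : List A) (h : LexLt u v) : LexLt u (v ++ z) := by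
  unfold LexLt at *
  induction h with
  | nil => exact List.Lex.nil
  | cons _ ih => exact List.Lex.cons ih
  | rel h => exact List.Lex.rel h

theorem lexLt_le_trans {u v x : List A} (h1 : LexLt u v) (h2 : LexLe v x) : LexLt u x := by
  rcases h2 with rfl | h2
  · exact h1
  · exact lexLt_trans' h1 h2

theorem suffix_eq_of_length {s t w : List A} (h1 : s <:+ w) (h2 : t <:+ w)
    (h : s.length = t.length) : s = t := by
  rcases List.suffix_or_suffix_of_suffix h1 h2 with h3 | h3
  · exact h3.eq_of_length h
  · exact (h3.eq_of_length h.symm).symm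

theorem suffix_of_suffix_length_le {s t w : List A} (h1 : s <:+ w) (h2 : t <:+ w)
    (h : s.length ≤ t.length) : s <:+ t := by
  rcases List.suffix_or_suffix_of_suffix h1 h2 with h3 | h3
  · exact h3
  · have := h3.eq_of_length (le_antisymm h3.length_le h)
    rw [this]

theorem suffix_flatten_decomp {s : List A} {fs : List (List A)} (hs : s ≠ [])
    (h : s <:+ fs.flatten) :
    ∃ xs b ys u, fs = xs ++ b :: ys ∧ u <:+ b ∧ u ≠ [] ∧ s = u ++ ys.flatten := by
  induction fs with
  | nil => rw [List.flatten_nil, List.suffix_nil] at h; exact absurd h hs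
  | cons a t ih =>
    rw [List.flatten_cons] at h
    have h2 : t.flatten <:+ a ++ t.flatten := List.suffix_append _ _
    by_cases hle : s.length ≤ t.flatten.length
    · have h' : s <:+ t.flatten := suffix_of_suffix_length_le h h2 hle
      obtain ⟨xs, b, ys, u, he, h1, h3, h4⟩ := ih h'
      exact ⟨a :: xs, b, ys, u, by rw [he, List.cons_append], h1, h3, h4⟩
    · push_neg at hle
      have h3 : t.flatten <:+ s := suffix_of_suffix_length_le h2 h hle.le
      obtain ⟨u, hu⟩ := h3
      obtain ⟨q, hq⟩ := h
      have hq' : (q ++ u) ++ t.flatten = a ++ t.flatten := by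
        rw [List.append_assoc, hu]; exact hq
      have hqu : q ++ u = a := List.append_cancel_right hq'
      have hu0 : u ≠ [] := by
        intro e
        rw [e, List.nil_append] at hu
        rw [← hu] at hle
        exact lt_irrefl _ hle
      exact ⟨[], a, t, u, by simp, ⟨q, hqu⟩, hu0, hu.symm⟩

theorem exists_append_singleton_of_ne_nil {B : Type*} {l : List B} (h : l ≠ []) :
    ∃ l' a, l = l' ++ [a] := by
  rcases List.eq_nil_or_concat l with rfl | ⟨l', a, h2⟩
  · exact absurd rfl h
  · exact ⟨l', a, by rw [h2, List.concat_eq_append]⟩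

theorem isNyldon_def (w : List A) : IsNyldon w ↔ w ≠ [] ∧ ∀ fs : List (List A),
    2 ≤ fs.length → (∀ g ∈ fs, g ≠ []) → fs.flatten = w → (∀ f ∈ fs, IsNyldon f) →
    fs.Chain' LexLe → False := by
  rw [IsNyldon]

theorem IsNyldon.ne_nil {w : List A} (h : IsNyldon w) : w ≠ [] :=
  ((isNyldon_def w).mp h).1

theorem IsNyldon.no_fact {w : List A} (h : IsNyldon w) (fs : List (List A))
    (h2 : 2 ≤ fs.length) (hfl : fs.flatten = w) (hN : ∀ f ∈ fs, IsNyldon f)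
    (hc : fs.Chain' LexLe) : False :=
  ((isNyldon_def w).mp h).2 fs h2 (fun g hg => (hN g hg).ne_nil) hfl hN hc

theorem isNyldon_of_length_one {w : List A} (h : w.length = 1) : IsNyldon w := by
  rw [isNyldon_def]
  refine ⟨by intro e; rw [e] at h; simp at h, ?_⟩
  intro fs h2 hne hj _ _
  have := length_le_length_flatten_of_ne_nil hne
  rw [hj, h] at this
  omega

theorem exists_nyldon_factorization (w : List A) (hw : w ≠ []) :
    ∃ fs, IsNyldonFactorization fs w := by
  by_cases h : IsNyldon w
  · exact ⟨[w], fun f hf => by rw [List.mem_singleton.mp hf]; exact h,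
      List.isChain_singleton _, by simp⟩
  · rw [isNyldon_def] at h
    push_neg at h
    obtain ⟨fs, h2, hne, hj, hf, hc, -⟩ := h hw
    exact ⟨fs, hf, hc, hj⟩

theorem eq_nil_of_factorization_nil {fs : List (List A)}
    (hfac : IsNyldonFactorization fs []) : fs = [] := by
  obtain ⟨hmem, -, hfl⟩ := hfac
  have := length_le_length_flatten_of_ne_nil (fun g hg => (hmem g hg).ne_nil)
  rw [hfl] at this
  simp only [List.length_nil, Nat.le_zero] at this
  exact List.length_eq_zero_iff.mp this

/-- The Nyldon-suffix property: every proper Nyldon suffix of a Nyldon word is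
lexicographically smaller. -/
def Hst (w : List A) : Prop :=
  IsNyldon w → ∀ s : List A, s ≠ [] → s.length < w.length → s <:+ w → IsNyldon s → LexLt s w

/-- The last factor of any Nyldon factorization is the longest Nyldon suffix. -/
def Gst (w : List A) : Prop :=
  ∀ (xs : List (List A)) (b : List A), IsNyldonFactorization (xs ++ [b]) w →
    ∀ s : List A, s ≠ [] → IsNyldon s → s <:+ w → s.length ≤ b.length

theorem Gstep {n : ℕ} (ihH : ∀ w : List A, w.length ≤ n → Hst w) :
    ∀ w : List A, w.length ≤ n + 1 → Gst w := by
  intro w hw xs b hfac s hs hsN hssuf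
  by_contra hlen
  push_neg at hlen
  obtain ⟨hmem, hchain, hflat⟩ := hfac
  have hslen : s.length ≤ w.length := hssuf.length_le
  by_cases hsw : s.length = w.length
  · have hseq : s = w := hssuf.eq_of_length hsw
    subst hseq
    by_cases hxs : xs = []
    · subst hxs
      simp only [List.nil_append, List.flatten_cons, List.flatten_nil,
        List.append_nil] at hflat
      rw [hflat] at hlen
      exact lt_irrefl _ hlen
    · exact hsN.no_fact (xs ++ [b]) (by
        have : 0 < xs.length := List.length_pos_iff.mpr hxs
        simp only [List.length_append, List.length_cons, List.length_nil]
        omega) hflat hmem hchain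
  have hslt : s.length < w.length := lt_of_le_of_ne hslen hsw
  rw [← hflat] at hssuf
  obtain ⟨xs2, b2, ys, u, hfs_eq, husuf, hu0, hs_eq⟩ := suffix_flatten_decomp hs hssuf
  have hys : ys ≠ [] := by
    rintro rfl
    have hb2 : b2 = b := by
      have h := congrArg List.getLast? hfs_eq.symm
      simpa using h
    have h2 : s.length ≤ b2.length := by
      rw [hs_eq]; simpa using husuf.length_le
    rw [hb2] at h2; omega
  obtain ⟨c, ys', rfl⟩ := List.exists_cons_of_ne_nil hys
  have hsubsuf : (b2 :: c :: ys') <:+ xs ++ [b] := ⟨xs2, hfs_eq.symm⟩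
  have hchain2 : (b2 :: c :: ys').Chain' LexLe := hchain.infix hsubsuf.isInfix
  have hb2c : LexLe b2 c := (List.isChain_cons_cons.mp hchain2).1
  have hmem2 : ∀ f ∈ b2 :: c :: ys', IsNyldon f := fun f hf => hmem f (hsubsuf.subset hf)
  by_cases hub : u = b2
  · subst hub
    exact hsN.no_fact (u :: c :: ys') (by simp)
      (by rw [hs_eq, List.flatten_cons]) hmem2 hchain2
  · have hulen : u.length < b2.length := by
      rcases lt_or_eq_of_le husuf.length_le with h | h
      · exact h
      · exact absurd (husuf.eq_of_length h) hub
    obtain ⟨us, husfac⟩ := exists_nyldon_factorization u hu0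
    have husne : us ≠ [] := by
      rintro rfl; exact hu0 husfac.2.2.symm
    obtain ⟨us', ur, rfl⟩ := exists_append_singleton_of_ne_nil husne
    have hus_flat : us'.flatten ++ ur = u := by
      have h := husfac.2.2; rwa [List.flatten_concat] at h
    have hurN : IsNyldon ur := husfac.1 ur (by simp)
    have hncu : ¬ LexLe ur c := by
      intro hle
      apply hsN.no_fact ((us' ++ [ur]) ++ c :: ys')
      · simp only [List.length_append, List.length_cons, List.length_nil]; omega
      · rw [List.flatten_append, husfac.2.2, hs_eq]
      · intro f hf
        rcases List.mem_append.mp hf with hf | hf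
        · exact husfac.1 f hf
        · exact hmem2 f (List.mem_cons_of_mem _ hf)
      · refine List.isChain_append.mpr ?_
        refine ⟨husfac.2.1, (List.isChain_cons_cons.mp hchain2).2, ?_⟩
        intro x hx y hy
        simp only [List.getLast?_concat, Option.mem_def, Option.some_inj] at hx
        simp only [List.head?_cons, Option.mem_def, Option.some_inj] at hy
        rw [← hx, ← hy]
        exact hle
    have hcur : LexLt c ur := lexLt_of_not_lexLe hncu
    have hb2N : IsNyldon b2 := hmem2 b2 (by simp)
    have hb2mem : b2 ∈ xs ++ [b] := by rw [hfs_eq]; simp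
    have hb2small : b2.length < w.length := by
      have hlt := length_lt_length_flatten (f := b2) (fs := xs ++ [b])
        (by rw [hfs_eq]; simp only [List.length_append, List.length_cons]; omega)
        (fun g hg => (hmem g hg).ne_nil) hb2mem
      rwa [hflat] at hlt
    have hursufu : ur <:+ u := ⟨us'.flatten, hus_flat⟩
    have hursuf : ur <:+ b2 := hursufu.trans husuf
    have hurlt : ur.length < b2.length := lt_of_le_of_lt hursufu.length_le hulen
    have hurb2 : LexLt ur b2 :=
      ihH b2 (by omega) hb2N ur hurN.ne_nil hurlt hursuf hurN
    exact lexLt_irrefl' c (lexLt_le_trans (lexLt_trans' hcur hurb2) hb2c)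

theorem SFstep {n : ℕ} (ihG : ∀ w : List A, w.length ≤ n → Gst w)
    (w : List A) (hw : w.length ≤ n + 1) (hwN : IsNyldon w) (hw2 : 2 ≤ w.length) :
    ∃ p u : List A, w = p ++ u ∧ p ≠ [] ∧ u ≠ [] ∧ IsNyldon u ∧ IsNyldon p ∧ LexLt u p ∧
      (∀ s : List A, s ≠ [] → s.length < w.length → s <:+ w → IsNyldon s →
        s.length ≤ u.length) := by
  classical
  set S : Finset ℕ := (Finset.range w.length).filter (fun k => 1 ≤ k ∧ IsNyldon (w.drop k))
    with hS
  have hSne : S.Nonempty := by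
    refine ⟨w.length - 1, ?_⟩
    simp only [hS, Finset.mem_filter, Finset.mem_range]
    refine ⟨by omega, by omega, isNyldon_of_length_one ?_⟩
    rw [List.length_drop]; omega
  set k0 := S.min' hSne with hk0
  have hk0S : k0 ∈ S := S.min'_mem hSne
  simp only [hS, Finset.mem_filter, Finset.mem_range] at hk0S
  obtain ⟨hk0lt, hk01, huN⟩ := hk0S
  set u := w.drop k0 with hu
  set p := w.take k0 with hp
  have hw_eq : w = p ++ u := (List.take_append_drop k0 w).symm
  have hplen : p.length = k0 := by rw [hp, List.length_take]; omega
  have hulen : u.length = w.length - k0 := by rw [hu, List.length_drop]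
  have hpne : p ≠ [] := by
    intro e; rw [e] at hplen; simp only [List.length_nil] at hplen; omega
  have hune : u ≠ [] := by
    intro e; rw [e] at hulen; simp only [List.length_nil] at hulen; omega
  have hmax : ∀ s : List A, s ≠ [] → s.length < w.length → s <:+ w → IsNyldon s →
      s.length ≤ u.length := by
    intro s hs hslt hssuf hsN
    obtain ⟨t, ht⟩ := hssuf
    have htl : t.length + s.length = w.length := by
      have h := congrArg List.length ht
      simpa using h
    have hdrop : w.drop t.length = s := by rw [← ht, List.drop_left]
    have hmemS : t.length ∈ S := by
      simp only [hS, Finset.mem_filter, Finset.mem_range]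
      have hs1 : 1 ≤ s.length := List.length_pos_iff.mpr hs
      exact ⟨by omega, by omega, by rw [hdrop]; exact hsN⟩
    have := S.min'_le _ hmemS
    omega
  have hpN : IsNyldon p := by
    by_contra hpN
    obtain ⟨ps, hpsfac⟩ := exists_nyldon_factorization p hpne
    have hpsne : ps ≠ [] := by
      rintro rfl; exact hpne hpsfac.2.2.symm
    have hps2 : 2 ≤ ps.length := by
      rcases Nat.lt_or_ge ps.length 2 with h | h
      · exfalso
        have h1 : ps.length = 1 := by
          have := List.length_pos_iff.mpr hpsne; omega
        obtain ⟨x, rfl⟩ := List.length_eq_one_iff.mp h1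
        have hx : x = p := by simpa using hpsfac.2.2
        exact hpN (hx ▸ hpsfac.1 x (by simp))
      · exact h
    obtain ⟨ps', pm, rfl⟩ := exists_append_singleton_of_ne_nil hpsne
    have hpm_eq : ps'.flatten ++ pm = p := by
      have h := hpsfac.2.2; rwa [List.flatten_concat] at h
    have hpmN : IsNyldon pm := hpsfac.1 pm (by simp)
    have hnpmu : ¬ LexLe pm u := by
      intro hle
      apply hwN.no_fact ((ps' ++ [pm]) ++ [u])
      · simp only [List.length_append, List.length_cons, List.length_nil]; omega
      · rw [List.flatten_append, hpsfac.2.2]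
        simp only [List.flatten_cons, List.flatten_nil, List.append_nil]
        exact hw_eq.symm
      · intro f hf
        rcases List.mem_append.mp hf with hf | hf
        · exact hpsfac.1 f hf
        · rw [List.mem_singleton.mp hf]; exact huN
      · refine List.isChain_append.mpr ?_
        refine ⟨hpsfac.2.1, List.isChain_singleton _, ?_⟩
        intro x hx y hy
        simp only [List.getLast?_concat, Option.mem_def, Option.some_inj] at hx
        simp only [List.head?_cons, Option.mem_def, Option.some_inj] at hy
        rw [← hx, ← hy]
        exact hle
    have hupm : LexLt u pm := lexLt_of_not_lexLe hnpmu
    have hps'len : 1 ≤ ps'.length := by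
      have := hps2
      simp only [List.length_append, List.length_cons, List.length_nil] at this
      omega
    have hps'flat : 1 ≤ ps'.flatten.length := by
      have h := length_le_length_flatten_of_ne_nil (s := ps')
        (fun g hg => (hpsfac.1 g (by simp [hg])).ne_nil)
      omega
    have htlen : (pm ++ u).length < w.length := by
      have h1 := congrArg List.length hpm_eq
      have h2 := congrArg List.length hw_eq
      simp only [List.length_append] at h1 h2 ⊢
      omega
    have htne : (pm ++ u) ≠ [] := by
      simp [hpmN.ne_nil]
    obtain ⟨zs, hzsfac⟩ := exists_nyldon_factorization (pm ++ u) htne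
    have hzsne : zs ≠ [] := by
      rintro rfl; exact htne hzsfac.2.2.symm
    obtain ⟨zs', z, rfl⟩ := exists_append_singleton_of_ne_nil hzsne
    have hz_eq : zs'.flatten ++ z = pm ++ u := by
      have h := hzsfac.2.2; rwa [List.flatten_concat] at h
    have hzN : IsNyldon z := hzsfac.1 z (by simp)
    have hzsuf_t : z <:+ pm ++ u := ⟨zs'.flatten, hz_eq⟩
    have huz : u.length ≤ z.length :=
      ihG (pm ++ u) (by omega) zs' z hzsfac u hune huN (List.suffix_append _ _)
    have htsuf : (pm ++ u) <:+ w := by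
      rw [hw_eq, ← hpm_eq, List.append_assoc]
      exact ⟨ps'.flatten, rfl⟩
    have hzsufw : z <:+ w := hzsuf_t.trans htsuf
    have hzlt : z.length < w.length := lt_of_le_of_lt hzsuf_t.length_le htlen
    have hzle : z.length ≤ u.length := hmax z hzN.ne_nil hzlt hzsufw hzN
    have hzu : z = u :=
      suffix_eq_of_length hzsuf_t (List.suffix_append _ _) (le_antisymm hzle huz)
    rw [hzu] at hz_eq
    have hzs'flat : zs'.flatten = pm := List.append_cancel_right hz_eq
    have hzs'ne : zs' ≠ [] := by
      rintro rfl; exact hpmN.ne_nil hzs'flat.symm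
    have hzs'len : zs'.length = 1 := by
      rcases Nat.lt_or_ge zs'.length 2 with h | h
      · have := List.length_pos_iff.mpr hzs'ne; omega
      · exfalso
        exact hpmN.no_fact zs' h hzs'flat (fun f hf => hzsfac.1 f (by simp [hf]))
          (hzsfac.2.1.infix (List.prefix_append _ _).isInfix)
    obtain ⟨x, rfl⟩ := List.length_eq_one_iff.mp hzs'len
    have hxpm : x = pm := by simpa using hzs'flat
    have hj : LexLe x z := by
      have h := hzsfac.2.1
      exact (List.isChain_cons_cons.mp h).1
    rw [hxpm, hzu] at hj
    exact hnpmu hj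
  have hnpu : ¬ LexLe p u := by
    intro hle
    apply hwN.no_fact [p, u] (by simp)
    · simp only [List.flatten_cons, List.flatten_nil, List.append_nil]
      exact hw_eq.symm
    · intro f hf
      rcases List.mem_cons.mp hf with rfl | hf
      · exact hpN
      · rw [List.mem_singleton.mp hf]; exact huN
    · exact List.isChain_pair.mpr hle
  exact ⟨p, u, hw_eq, hpne, hune, huN, hpN, lexLt_of_not_lexLe hnpu, hmax⟩

theorem mainHG : ∀ (n : ℕ) (w : List A), w.length ≤ n → Hst w ∧ Gst w := by
  intro n
  induction n with
  | zero =>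
    intro w hw
    have hwnil : w = [] := List.length_eq_zero_iff.mp (Nat.le_zero.mp hw)
    subst hwnil
    constructor
    · intro hN
      exact absurd rfl hN.ne_nil
    · intro xs b hfac s hs hsN hssuf
      rw [List.suffix_nil] at hssuf
      exact absurd hssuf hs
  | succ n ih =>
    intro w hw
    have ihH : ∀ w' : List A, w'.length ≤ n → Hst w' := fun w' h => (ih w' h).1
    have ihG : ∀ w' : List A, w'.length ≤ n → Gst w' := fun w' h => (ih w' h).2
    refine ⟨?_, Gstep ihH w hw⟩
    intro hwN s hs hslt hssuf hsN
    have hs1 : 1 ≤ s.length := List.length_pos_iff.mpr hs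
    have hw2 : 2 ≤ w.length := by omega
    obtain ⟨p, u, hw_eq, hpne, hune, huN, hpN, hup, hmax⟩ := SFstep ihG w hw hwN hw2
    have huw : LexLt u w := by rw [hw_eq]; exact lexLt_append' u hup
    have hsle : s.length ≤ u.length := hmax s hs hslt hssuf hsN
    have husuf : u <:+ w := hw_eq ▸ List.suffix_append _ _
    rcases lt_or_eq_of_le hsle with h | h
    · have hssu : s <:+ u := suffix_of_suffix_length_le hssuf husuf hsle
      have hult : u.length < w.length := by
        have h1 := congrArg List.length hw_eq
        simp only [List.length_append] at h1
        have h2 := List.length_pos_iff.mpr hpne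
        omega
      exact lexLt_trans' (ihH u (by omega) huN s hs h hssu hsN) huw
    · rw [suffix_eq_of_length hssuf husuf h]
      exact huw

theorem nyldon_fact_unique : ∀ (n : ℕ) (w : List A), w.length ≤ n →
    ∀ fs gs, IsNyldonFactorization fs w → IsNyldonFactorization gs w → fs = gs := by
  intro n
  induction n with
  | zero =>
    intro w hw fs gs hf hg
    have hwnil : w = [] := List.length_eq_zero_iff.mp (Nat.le_zero.mp hw)
    subst hwnil
    rw [eq_nil_of_factorization_nil hf, eq_nil_of_factorization_nil hg]
  | succ n ih =>
    intro w hw fs gs hf hg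
    by_cases hwnil : w = []
    · subst hwnil
      rw [eq_nil_of_factorization_nil hf, eq_nil_of_factorization_nil hg]
    have hfsne : fs ≠ [] := by
      rintro rfl; exact hwnil (by simpa using hf.2.2.symm)
    have hgsne : gs ≠ [] := by
      rintro rfl; exact hwnil (by simpa using hg.2.2.symm)
    obtain ⟨fs', a, rfl⟩ := exists_append_singleton_of_ne_nil hfsne
    obtain ⟨gs', b, rfl⟩ := exists_append_singleton_of_ne_nil hgsne
    have haN : IsNyldon a := hf.1 a (by simp)
    have hbN : IsNyldon b := hg.1 b (by simp)
    have hffl : fs'.flatten ++ a = w := by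
      have h := hf.2.2; rwa [List.flatten_concat] at h
    have hgfl : gs'.flatten ++ b = w := by
      have h := hg.2.2; rwa [List.flatten_concat] at h
    have hasuf : a <:+ w := ⟨fs'.flatten, hffl⟩
    have hbsuf : b <:+ w := ⟨gs'.flatten, hgfl⟩
    have hGw : Gst w := (mainHG (n + 1) w hw).2
    have h1 : b.length ≤ a.length := hGw fs' a hf b hbN.ne_nil hbN hbsuf
    have h2 : a.length ≤ b.length := hGw gs' b hg a haN.ne_nil haN hasuf
    have hab : a = b := suffix_eq_of_length hasuf hbsuf (le_antisymm h2 h1)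
    subst hab
    have hfl : fs'.flatten = gs'.flatten :=
      List.append_cancel_right (hffl.trans hgfl.symm)
    have hffac : IsNyldonFactorization fs' fs'.flatten :=
      ⟨fun f hf' => hf.1 f (by simp [hf']),
        hf.2.1.infix (List.prefix_append _ _).isInfix, rfl⟩
    have hgfac : IsNyldonFactorization gs' fs'.flatten :=
      ⟨fun f hf' => hg.1 f (by simp [hf']),
        hg.2.1.infix (List.prefix_append _ _).isInfix, hfl.symm⟩
    have hlen : fs'.flatten.length ≤ n := by
      have h3 := congrArg List.length hffl
      simp only [List.length_append] at h3
      have h4 := List.length_pos_iff.mpr haN.ne_nil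
      omega
    rw [ih fs'.flatten hlen fs' gs' hffac hgfac]

end Stmt2Aux

/-- Every nonempty word has exactly one Nyldon factorization. -/
theorem stmt_2 {A : Type*} [LinearOrder A] [Fintype A] (hA : 2 ≤ Fintype.card A)
    (w : List A) (hw : w ≠ []) :
    ∃! fs : List (List A), IsNyldonFactorization fs w := by
  obtain ⟨fs, hfs⟩ := exists_nyldon_factorization w hw
  exact ⟨fs, hfs, fun y hy => nyldon_fact_unique w.length w le_rfl y fs hy hfs⟩
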